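/- For u ∈ ℝ and 0 < ε ≤ 1, let A_ε(u) = { (t, l) ∈ ℝ × (0, ∞) : (ε ≤ l ≤ 1 and |t − u| ≤ l/2) or (l ≥ 1 and |t − u| ≤ 1/2) } be the Bacry–Muzy conical set, and let ρ be the measure on ℝ × (0, ∞) with density 1/l² with respect to the Lebesgue measure dt dl. Then for all u, v ∈ ℝ, the measure ρ(A_ε(u) ∩ A_ε(v)) equals: −log|u − v| if ε ≤ |u − v| ≤ 1; −log ε + (1 − |u − v|/ε) if 0 ≤ |u − v| < ε; and 0 if |u − v| > 1. -/

import Mathlib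

open MeasureTheory Real

/-- The Bacry–Muzy conical set `A_ε(u)` in the time-scale half-plane, viewed as a
subset of `ℝ × ℝ` (all its points have positive second coordinate). -/
def coneSet (ε u : ℝ) : Set (ℝ × ℝ) :=
  {p | (ε ≤ p.2 ∧ p.2 ≤ 1 ∧ |p.1 - u| ≤ p.2 / 2) ∨ (1 ≤ p.2 ∧ |p.1 - u| ≤ 1 / 2)}

/-- `ρ(A) = ∫∫_A (1/l²) dt dl`, the intensity measure of the canonical
Bacry–Muzy construction. -/
noncomputable def coneRho (A : Set (ℝ × ℝ)) : ENNReal :=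
  ∫⁻ p in A, ENNReal.ofReal (1 / p.2 ^ 2)

lemma coneSet_eq (ε u : ℝ) (hε1 : ε ≤ 1) :
    coneSet ε u = {p : ℝ × ℝ | ε ≤ p.2 ∧ |p.1 - u| ≤ min p.2 1 / 2} := by
  ext ⟨t, l⟩
  simp only [coneSet, Set.mem_setOf_eq]
  constructor
  · rintro (⟨h1, h2, h3⟩ | ⟨h1, h2⟩)
    · exact ⟨h1, by rwa [min_eq_left h2]⟩
    · exact ⟨hε1.trans h1, by rwa [min_eq_right h1]⟩
  · rintro ⟨h1, h2⟩
    rcases le_or_gt l 1 with hl | hl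
    · exact Or.inl ⟨h1, hl, by rwa [min_eq_left hl] at h2⟩
    · exact Or.inr ⟨hl.le, by rwa [min_eq_right hl.le] at h2⟩

lemma coneInt_eq (ε u v : ℝ) (hε1 : ε ≤ 1) :
    coneSet ε u ∩ coneSet ε v =
      {p : ℝ × ℝ | ε ≤ p.2 ∧ |p.1 - u| ≤ min p.2 1 / 2 ∧ |p.1 - v| ≤ min p.2 1 / 2} := by
  rw [coneSet_eq ε u hε1, coneSet_eq ε v hε1]
  ext p; simp only [Set.mem_inter_iff, Set.mem_setOf_eq]; tauto

lemma coneInt_measurable (ε u v : ℝ) (hε1 : ε ≤ 1) :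
    MeasurableSet (coneSet ε u ∩ coneSet ε v) := by
  rw [coneInt_eq ε u v hε1]
  have h1 : IsClosed {p : ℝ × ℝ | ε ≤ p.2} := isClosed_le continuous_const continuous_snd
  have h2 : IsClosed {p : ℝ × ℝ | |p.1 - u| ≤ min p.2 1 / 2} :=
    isClosed_le (by fun_prop) (by fun_prop)
  have h3 : IsClosed {p : ℝ × ℝ | |p.1 - v| ≤ min p.2 1 / 2} :=
    isClosed_le (by fun_prop) (by fun_prop)
  exact (h1.inter (h2.inter h3)).measurableSet

/-- Slicing: the cone intersection intensity as a one-dimensional integral over scales. -/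
lemma coneRho_slice (ε u v : ℝ) (hε1 : ε ≤ 1) :
    coneRho (coneSet ε u ∩ coneSet ε v) =
      ∫⁻ l in Set.Ici ε,
        ENNReal.ofReal (1 / l ^ 2) * ENNReal.ofReal (min l 1 - |u - v|) := by
  have hS : MeasurableSet (coneSet ε u ∩ coneSet ε v) := coneInt_measurable ε u v hε1
  have hf : Measurable (fun p : ℝ × ℝ => ENNReal.ofReal (1 / p.2 ^ 2)) := by fun_prop
  rw [coneRho, ← lintegral_indicator hS, MeasureTheory.Measure.volume_eq_prod,
    MeasureTheory.lintegral_prod_symm _ (hf.indicator hS).aemeasurable]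
  rw [← lintegral_indicator measurableSet_Ici]
  congr 1
  funext l
  rcases le_or_gt ε l with hl | hl
  · set m := min l 1 / 2 with hm
    have hslice : ∀ t : ℝ, (coneSet ε u ∩ coneSet ε v).indicator
        (fun p : ℝ × ℝ => ENNReal.ofReal (1 / p.2 ^ 2)) (t, l) =
        (Set.Icc (max u v - m) (min u v + m)).indicator
          (fun _ => ENNReal.ofReal (1 / l ^ 2)) t := by
      intro t
      have hmem : (t, l) ∈ coneSet ε u ∩ coneSet ε v ↔
          t ∈ Set.Icc (max u v - m) (min u v + m) := by
        rw [coneInt_eq ε u v hε1]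
        simp only [Set.mem_setOf_eq]
        constructor
        · rintro ⟨-, h2, h3⟩
          rw [abs_sub_le_iff] at h2 h3
          have hmax : max u v ≤ t + m := max_le (by linarith [h2.2]) (by linarith [h3.2])
          have hmin : t - m ≤ min u v := le_min (by linarith [h2.1]) (by linarith [h3.1])
          exact ⟨by linarith, by linarith⟩
        · rintro ⟨h1, h2⟩
          have hu1 : u ≤ max u v := le_max_left u v
          have hv1 : v ≤ max u v := le_max_right u v
          have hu2 : min u v ≤ u := min_le_left u v
          have hv2 : min u v ≤ v := min_le_right u v
          exact ⟨hl, abs_sub_le_iff.mpr ⟨by linarith, by linarith⟩,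
            abs_sub_le_iff.mpr ⟨by linarith, by linarith⟩⟩
      by_cases ht : (t, l) ∈ coneSet ε u ∩ coneSet ε v
      · rw [Set.indicator_of_mem ht, Set.indicator_of_mem (hmem.mp ht)]
      · rw [Set.indicator_of_notMem ht, Set.indicator_of_notMem (fun h => ht (hmem.mpr h))]
    calc ∫⁻ t, (coneSet ε u ∩ coneSet ε v).indicator
          (fun p : ℝ × ℝ => ENNReal.ofReal (1 / p.2 ^ 2)) (t, l)
        = ∫⁻ t, (Set.Icc (max u v - m) (min u v + m)).indicator
            (fun _ => ENNReal.ofReal (1 / l ^ 2)) t := by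
          exact lintegral_congr hslice
      _ = ENNReal.ofReal (1 / l ^ 2) * volume (Set.Icc (max u v - m) (min u v + m)) :=
          lintegral_indicator_const measurableSet_Icc _
      _ = (Set.Ici ε).indicator (fun l =>
            ENNReal.ofReal (1 / l ^ 2) * ENNReal.ofReal (min l 1 - |u - v|)) l := by
          rw [Set.indicator_of_mem (Set.mem_Ici.mpr hl), Real.volume_Icc]
          congr 1
          rw [← max_sub_min_eq_abs', hm]
          congr 1
          ring
  · have hempty : ∀ t : ℝ, (t, l) ∉ coneSet ε u ∩ coneSet ε v := by
      intro t ht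
      rw [coneInt_eq ε u v hε1] at ht
      exact absurd ht.1 (not_le.mpr hl)
    rw [lintegral_congr (fun t => Set.indicator_of_notMem (hempty t) _), lintegral_zero,
      Set.indicator_of_notMem (by simpa using not_le.mpr hl)]

lemma int_Ioc_eval (d a : ℝ) (ha : 0 < a) (ha1 : a ≤ 1) :
    ∫ l in Set.Ioc a 1, 1 / l ^ 2 * (l - d) = d - Real.log a - d / a := by
  rw [← intervalIntegral.integral_of_le ha1]
  have huIcc : Set.uIcc a 1 = Set.Icc a 1 := Set.uIcc_of_le ha1
  have hderiv : ∀ l ∈ Set.uIcc a (1:ℝ),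
      HasDerivAt (fun x => Real.log x + d / x) (1 / l ^ 2 * (l - d)) l := by
    intro l hl
    rw [huIcc] at hl
    have hl0 : 0 < l := lt_of_lt_of_le ha hl.1
    have h1 := Real.hasDerivAt_log (ne_of_gt hl0)
    have h2 : HasDerivAt (fun x : ℝ => d / x) (d * (-(l ^ 2)⁻¹)) l := by
      simpa [div_eq_mul_inv] using (hasDerivAt_inv (ne_of_gt hl0)).const_mul d
    refine (h1.add h2).congr_deriv ?_
    field_simp
    ring
  have hint : IntervalIntegrable (fun l => 1 / l ^ 2 * (l - d)) volume a 1 := by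
    apply ContinuousOn.intervalIntegrable
    apply ContinuousOn.mul
    · apply ContinuousOn.div continuousOn_const (by fun_prop)
      intro x hx
      rw [huIcc] at hx
      exact pow_ne_zero _ (ne_of_gt (lt_of_lt_of_le ha hx.1))
    · fun_prop
  rw [intervalIntegral.integral_eq_sub_of_hasDerivAt hderiv hint]
  simp only [Real.log_one, Real.log_one, div_one]
  ring

lemma lint_Ioc (d a : ℝ) (ha : 0 < a) (ha1 : a ≤ 1) (hda : d ≤ a) :
    ∫⁻ l in Set.Ioc a 1, ENNReal.ofReal (1 / l ^ 2 * (l - d)) =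
      ENNReal.ofReal (d - Real.log a - d / a) := by
  have hint : IntegrableOn (fun l => 1 / l ^ 2 * (l - d)) (Set.Ioc a 1) := by
    apply IntegrableOn.mono_set _ Set.Ioc_subset_Icc_self
    apply ContinuousOn.integrableOn_Icc
    apply ContinuousOn.mul
    · apply ContinuousOn.div continuousOn_const (by fun_prop)
      intro x hx
      exact pow_ne_zero _ (ne_of_gt (lt_of_lt_of_le ha hx.1))
    · fun_prop
  have hnn : 0 ≤ᵐ[volume.restrict (Set.Ioc a 1)] fun l => 1 / l ^ 2 * (l - d) := by
    refine (MeasureTheory.ae_restrict_iff' measurableSet_Ioc).2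
      (Filter.Eventually.of_forall fun l hl => ?_)
    show (0:ℝ) ≤ 1 / l ^ 2 * (l - d)
    have h0 : 0 < l := lt_trans ha hl.1
    have h2 : d ≤ l := hda.trans hl.1.le
    exact mul_nonneg (by positivity) (by linarith)
  rw [← MeasureTheory.ofReal_integral_eq_lintegral_ofReal hint hnn, int_Ioc_eval d a ha ha1]

lemma lint_Ioi (c : ℝ) (hc : 0 ≤ c) :
    ∫⁻ l in Set.Ioi (1:ℝ), ENNReal.ofReal (1 / l ^ 2 * c) = ENNReal.ofReal c := by
  have hcont : ContinuousWithinAt (fun l : ℝ => -(c / l)) (Set.Ici 1) 1 := by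
    apply ContinuousAt.continuousWithinAt
    have : ContinuousAt (fun l : ℝ => c / l) 1 := ContinuousAt.div continuousAt_const
      continuousAt_id (by norm_num)
    exact this.neg
  have hderiv : ∀ x ∈ Set.Ioi (1:ℝ), HasDerivAt (fun l : ℝ => -(c / l)) (1 / x ^ 2 * c) x := by
    intro x hx
    have hx0 : (0:ℝ) < x := lt_trans one_pos hx
    have h2 : HasDerivAt (fun l : ℝ => c / l) (c * (-(x ^ 2)⁻¹)) x := by
      simpa [div_eq_mul_inv] using (hasDerivAt_inv (ne_of_gt hx0)).const_mul c
    refine h2.neg.congr_deriv ?_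
    field_simp
  have hpos : ∀ x ∈ Set.Ioi (1:ℝ), 0 ≤ 1 / x ^ 2 * c := by
    intro x hx
    have hx0 : (0:ℝ) < x := lt_trans one_pos hx
    positivity
  have htend : Filter.Tendsto (fun l : ℝ => -(c / l)) Filter.atTop (nhds 0) := by
    have := Filter.Tendsto.div_atTop (tendsto_const_nhds (x := c)) Filter.tendsto_id
    simpa using this.neg
  have hint : IntegrableOn (fun x : ℝ => 1 / x ^ 2 * c) (Set.Ioi 1) :=
    integrableOn_Ioi_deriv_of_nonneg hcont hderiv hpos htend
  have heval := integral_Ioi_of_hasDerivAt_of_tendsto hcont hderiv hint htend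
  have hnn : 0 ≤ᵐ[volume.restrict (Set.Ioi (1:ℝ))] fun x : ℝ => 1 / x ^ 2 * c := by
    refine (MeasureTheory.ae_restrict_iff' measurableSet_Ioi).2
      (Filter.Eventually.of_forall fun l hl => hpos l hl)
  rw [← MeasureTheory.ofReal_integral_eq_lintegral_ofReal hint hnn, heval]
  norm_num

lemma rhs_compute (ε d : ℝ) (hε : 0 < ε) (hε1 : ε ≤ 1) (hd1 : d ≤ 1) :
    ∫⁻ l in Set.Ici ε, ENNReal.ofReal (1 / l ^ 2) * ENNReal.ofReal (min l 1 - d) =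
      ENNReal.ofReal (d - Real.log (max ε d) - d / max ε d) + ENNReal.ofReal (1 - d) := by
  set a := max ε d with ha
  have ha0 : 0 < a := lt_of_lt_of_le hε (le_max_left ε d)
  have ha1 : a ≤ 1 := max_le hε1 hd1
  have hdisj : Disjoint (Set.Icc ε 1) (Set.Ioi (1:ℝ)) := by
    rw [Set.disjoint_left]
    intro x hx hx'
    exact absurd hx.2 (not_le.mpr hx')
  rw [← Set.Icc_union_Ioi_eq_Ici hε1, lintegral_union measurableSet_Ioi hdisj]
  congr 1
  · calc ∫⁻ l in Set.Icc ε 1, ENNReal.ofReal (1 / l ^ 2) * ENNReal.ofReal (min l 1 - d)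
        = ∫⁻ l in Set.Icc ε 1, ENNReal.ofReal (1 / l ^ 2 * (l - d)) := by
          apply MeasureTheory.setLIntegral_congr_fun measurableSet_Icc
          intro l hl
          have hl0 : (0:ℝ) < l := lt_of_lt_of_le hε hl.1
          beta_reduce
          rw [min_eq_left hl.2, ENNReal.ofReal_mul (by positivity)]
      _ = (∫⁻ l in Set.Icc ε a, ENNReal.ofReal (1 / l ^ 2 * (l - d))) +
            ∫⁻ l in Set.Ioc a 1, ENNReal.ofReal (1 / l ^ 2 * (l - d)) := by
          rw [← lintegral_union measurableSet_Ioc (by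
            rw [Set.disjoint_left]; intro x hx hx'; exact absurd hx.2 (not_le.mpr hx'.1)),
            Set.Icc_union_Ioc_eq_Icc (le_max_left ε d) ha1]
      _ = 0 + ENNReal.ofReal (d - Real.log a - d / a) := by
          rw [lint_Ioc d a ha0 ha1 (le_max_right ε d)]
          congr 1
          rcases le_or_gt ε d with h | h
          · have had : a = d := max_eq_right h
            rw [had]
            rw [MeasureTheory.setLIntegral_congr_fun measurableSet_Icc
              (f := fun l => ENNReal.ofReal (1 / l ^ 2 * (l - d))) (g := fun _ => 0)
              (by
                intro l hl
                rw [ENNReal.ofReal_eq_zero]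
                have h1 : (0:ℝ) ≤ 1 / l ^ 2 := by positivity
                nlinarith [hl.2])]
            simp
          · have had : a = ε := max_eq_left h.le
            rw [had, Set.Icc_self]
            exact MeasureTheory.setLIntegral_measure_zero _ _ (by simp)
      _ = ENNReal.ofReal (d - Real.log a - d / a) := by rw [zero_add]
  · calc ∫⁻ l in Set.Ioi (1:ℝ), ENNReal.ofReal (1 / l ^ 2) * ENNReal.ofReal (min l 1 - d)
        = ∫⁻ l in Set.Ioi (1:ℝ), ENNReal.ofReal (1 / l ^ 2 * (1 - d)) := by
          apply MeasureTheory.setLIntegral_congr_fun measurableSet_Ioi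
          intro l hl
          beta_reduce
          rw [min_eq_right hl.le, ENNReal.ofReal_mul (by positivity)]
      _ = ENNReal.ofReal (1 - d) := lint_Ioi (1 - d) (by linarith)

theorem cone_intersection_intensity
    (ε u v : ℝ) (hε : 0 < ε) (hε1 : ε ≤ 1) :
    (ε ≤ |u - v| → |u - v| ≤ 1 →
        coneRho (coneSet ε u ∩ coneSet ε v) = ENNReal.ofReal (-Real.log |u - v|)) ∧
      (|u - v| < ε →
        coneRho (coneSet ε u ∩ coneSet ε v) =
          ENNReal.ofReal (-Real.log ε + (1 - |u - v| / ε))) ∧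
      (1 < |u - v| → coneRho (coneSet ε u ∩ coneSet ε v) = 0) := by
  refine ⟨fun h1 h2 => ?_, fun hlt => ?_, fun hgt => ?_⟩
  · have hd0 : 0 < |u - v| := lt_of_lt_of_le hε h1
    rw [coneRho_slice ε u v hε1, rhs_compute ε |u - v| hε hε1 h2,
      max_eq_right h1]
    have hA : 0 ≤ |u - v| - Real.log |u - v| - |u - v| / |u - v| := by
      rw [div_self hd0.ne']
      nlinarith [Real.log_le_sub_one_of_pos hd0]
    rw [← ENNReal.ofReal_add hA (by linarith)]
    congr 1
    rw [div_self hd0.ne']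
    ring
  · have hd1 : |u - v| ≤ 1 := (hlt.le).trans hε1
    rw [coneRho_slice ε u v hε1, rhs_compute ε |u - v| hε hε1 hd1,
      max_eq_left hlt.le]
    have hde : |u - v| / ε * ε = |u - v| := div_mul_cancel₀ _ hε.ne'
    have hx1 : |u - v| / ε ≤ 1 := (div_le_one hε).mpr hlt.le
    have hA : 0 ≤ |u - v| - Real.log ε - |u - v| / ε := by
      nlinarith [Real.log_le_sub_one_of_pos hε,
        mul_nonneg (by linarith : (0:ℝ) ≤ 1 - ε) (by linarith : (0:ℝ) ≤ 1 - |u - v| / ε)]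
    rw [← ENNReal.ofReal_add hA (by linarith [abs_nonneg (u - v)])]
    congr 1
    ring
  · rw [coneRho_slice ε u v hε1]
    rw [MeasureTheory.setLIntegral_congr_fun measurableSet_Ici
      (g := fun _ => 0) (by
        intro l hl
        have : min l 1 - |u - v| < 0 := by
          have := min_le_right l 1
          linarith
        beta_reduce
        rw [ENNReal.ofReal_eq_zero.mpr this.le, mul_zero])]
    simp
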